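/- Let ψ : ℝⁿ → ℝ ∪ {+∞} be proper closed convex and f : ℝⁿ → ℝ differentiable with L-Lipschitz gradient (L > 0); set F = f + ψ, assume F has nonempty minimizer set X* with minimal value F*, and let γ satisfy γL ∈ (0,1). Fix x₀ and suppose F satisfies 2-growth with constant κ > 0 on {y : F(y) ≤ F(x₀)}, i.e. F(y) − F* ≥ (κ/2)‖y − ȳ‖² for all such y (ȳ the Euclidean projection of y onto X*). Then for every x with F_γ(x) ≤ F_γ(x₀): F_γ(x) − F* ≥ κ(1 − γL)/(2(γκ + 1 − γL)) · ‖x − x̄‖², where x̄ is the Euclidean projection of x onto X* and F_γ is the Forward–Backward envelope. -/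

import Mathlib

set_option maxHeartbeats 1000000

noncomputable section
open scoped RealInnerProductSpace

lemma descent_aux {n : ℕ} (f : EuclideanSpace ℝ (Fin n) → ℝ) (L : ℝ) (hL0 : 0 ≤ L)
    (hf : Differentiable ℝ f)
    (hlip : ∀ x y, ‖gradient f x - gradient f y‖ ≤ L * ‖x - y‖)
    (x u : EuclideanSpace ℝ (Fin n)) :
    f u ≤ f x + ⟪gradient f x, u - x⟫ + L / 2 * ‖u - x‖ ^ 2 := by
  set v := u - x with hv
  have key : ∀ t : ℝ, HasDerivAt (fun s : ℝ => f (x + s • v))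
      ⟪gradient f (x + t • v), v⟫ t := by
    intro t
    have h1 : HasDerivAt (fun s : ℝ => x + s • v) v t := by
      simpa using ((hasDerivAt_id t).smul_const v).const_add x
    have h3 : HasFDerivAt f (InnerProductSpace.toDual ℝ _ (gradient f (x + t • v)))
        (x + t • v) := (hf (x + t • v)).hasGradientAt.hasFDerivAt
    have h4 := h3.comp_hasDerivAt t h1
    rw [InnerProductSpace.toDual_apply_apply] at h4
    exact h4
  have gradcont : Continuous (gradient f) := by
    have : LipschitzWith L.toNNReal (gradient f) := by
      apply LipschitzWith.of_dist_le_mul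
      intro a b
      simpa [dist_eq_norm, Real.coe_toNNReal L hL0] using hlip a b
    exact this.continuous
  have cont : Continuous fun t : ℝ => ⟪gradient f (x + t • v), v⟫ := by
    apply Continuous.inner
    · exact gradcont.comp (by continuity)
    · exact continuous_const
  have fund : ∫ t in (0:ℝ)..1, ⟪gradient f (x + t • v), v⟫
      = f (x + (1:ℝ) • v) - f (x + (0:ℝ) • v) := by
    exact intervalIntegral.integral_eq_sub_of_hasDerivAt (fun t _ => key t)
      (cont.intervalIntegrable 0 1)
  have bound : ∀ t ∈ Set.Icc (0:ℝ) 1,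
      ⟪gradient f (x + t • v), v⟫ ≤ ⟪gradient f x, v⟫ + (L * ‖v‖ ^ 2) * t := by
    intro t ht
    have h1 : ⟪gradient f (x + t • v) - gradient f x, v⟫
        ≤ ‖gradient f (x + t • v) - gradient f x‖ * ‖v‖ := real_inner_le_norm _ _
    have h2 : ‖gradient f (x + t • v) - gradient f x‖ ≤ L * (t * ‖v‖) := by
      have := hlip (x + t • v) x
      simpa [norm_smul, abs_of_nonneg ht.1] using this
    have h3 : ⟪gradient f (x + t • v) - gradient f x, v⟫
        = ⟪gradient f (x + t • v), v⟫ - ⟪gradient f x, v⟫ := inner_sub_left _ _ _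
    nlinarith [norm_nonneg v, norm_nonneg (gradient f (x + t • v) - gradient f x)]
  have intle : ∫ t in (0:ℝ)..1, ⟪gradient f (x + t • v), v⟫
      ≤ ∫ t in (0:ℝ)..1, (⟪gradient f x, v⟫ + (L * ‖v‖ ^ 2) * t) := by
    apply intervalIntegral.integral_mono_on (by norm_num)
      (cont.intervalIntegrable 0 1)
      (by apply Continuous.intervalIntegrable; continuity)
    exact bound
  have intval : ∫ t in (0:ℝ)..1, (⟪gradient f x, v⟫ + (L * ‖v‖ ^ 2) * t)
      = ⟪gradient f x, v⟫ + L / 2 * ‖v‖ ^ 2 := by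
    rw [intervalIntegral.integral_add (intervalIntegrable_const)
      ((intervalIntegral.intervalIntegrable_id).const_mul _),
      intervalIntegral.integral_const, intervalIntegral.integral_const_mul,
      integral_id]
    norm_num
    ring
  have hu1 : x + (1:ℝ) • v = u := by rw [hv]; simp
  have hu0 : x + (0:ℝ) • v = x := by simp
  rw [hu1, hu0] at fund
  calc f u = f x + (f u - f x) := by ring
    _ = f x + ∫ t in (0:ℝ)..1, ⟪gradient f (x + t • v), v⟫ := by rw [fund]
    _ ≤ f x + (⟪gradient f x, v⟫ + L / 2 * ‖v‖ ^ 2) := by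
        have := intle.trans_eq intval
        linarith
    _ = f x + ⟪gradient f x, u - x⟫ + L / 2 * ‖u - x‖ ^ 2 := by rw [← hv]; ring

lemma split_quad (α β c a b t : ℝ) (hα : 0 < α) (hβ : 0 < β) (hc : c * (α + β) = α * β)
    (ha : 0 ≤ a) (hb : 0 ≤ b) (ht : 0 ≤ t) (htab : t ≤ a + b) :
    c * t ^ 2 ≤ α * a ^ 2 + β * b ^ 2 := by
  have hαβ : 0 < α + β := by linarith
  have hc0 : 0 ≤ c := by nlinarith [mul_pos hα hβ]
  have h1 : t ^ 2 ≤ (a + b) ^ 2 := by nlinarith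
  have h2 : c * (a + b) ^ 2 ≤ α * a ^ 2 + β * b ^ 2 := by
    nlinarith [sq_nonneg (α * a - β * b), mul_pos hα hβ]
  nlinarith [mul_le_mul_of_nonneg_left h1 hc0]

/-- let `ψ : ℝⁿ → ℝ ∪ {+∞}` (modeled as an `EReal`-valued function never
taking `⊥`) be proper closed convex and `f : ℝⁿ → ℝ` differentiable with `L`-Lipschitz
gradient (`L > 0`); set `F = f + ψ`, with nonempty minimizer set `X*` and (real) minimal
value `F*`, and let `γ` satisfy `γL ∈ (0,1)`.  Let `F_γ` be the Forward–Backward envelope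
`F_γ(x) = inf_u { f(x) + ⟨∇f(x), u−x⟩ + ‖u−x‖²/(2γ) + ψ(u) }`.  Fix `x₀` and suppose `F`
satisfies `2`-growth with constant `κ > 0` on `{y : F(y) ≤ F(x₀)}` (where `ybar` denotes
the Euclidean projection of `y` onto `X*`).  Then for every `x` with `F_γ(x) ≤ F_γ(x₀)`:
`F_γ(x) − F* ≥ κ(1 − γL)/(2(γκ + 1 − γL)) · ‖x − xbar‖²`. -/
theorem forward_backward_envelope_two_growth (n : ℕ)
    (ψ : EuclideanSpace ℝ (Fin n) → EReal)
    (hψbot : ∀ x, ψ x ≠ ⊥) (hψproper : ∃ x, ψ x ≠ ⊤)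
    (hψclosed : LowerSemicontinuous ψ)
    (hψconvex : ∀ (u v : EuclideanSpace ℝ (Fin n)) (a c : ℝ), 0 ≤ a → 0 ≤ c → a + c = 1 →
      ψ (a • u + c • v) ≤ (a : EReal) * ψ u + (c : EReal) * ψ v)
    (f : EuclideanSpace ℝ (Fin n) → ℝ) (L : ℝ) (hL : 0 < L)
    (hf : Differentiable ℝ f)
    (hlip : ∀ x y, ‖gradient f x - gradient f y‖ ≤ L * ‖x - y‖)
    (F : EuclideanSpace ℝ (Fin n) → EReal)
    (hF : ∀ x, F x = (f x : EReal) + ψ x)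
    (Fs : ℝ) (Xs : Set (EuclideanSpace ℝ (Fin n)))
    (hXsne : Xs.Nonempty) (hXs : Xs = {y | F y = (Fs : EReal)})
    (hmin : ∀ y, (Fs : EReal) ≤ F y)
    (γ : ℝ) (hγL0 : 0 < γ * L) (hγL1 : γ * L < 1)
    (Fγ : EuclideanSpace ℝ (Fin n) → EReal)
    (hFγ : ∀ x, Fγ x = ⨅ u,
      ((f x + ⟪gradient f x, u - x⟫ + 1 / (2 * γ) * ‖u - x‖ ^ 2 : ℝ) : EReal) + ψ u)
    (x₀ : EuclideanSpace ℝ (Fin n)) (κ : ℝ) (hκ : 0 < κ)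
    (hgrowth : ∀ y, F y ≤ F x₀ → ∀ ybar ∈ Xs, (∀ z ∈ Xs, ‖y - ybar‖ ≤ ‖y - z‖) →
      ((Fs + κ / 2 * ‖y - ybar‖ ^ 2 : ℝ) : EReal) ≤ F y) :
    ∀ x, Fγ x ≤ Fγ x₀ → ∀ xbar ∈ Xs, (∀ z ∈ Xs, ‖x - xbar‖ ≤ ‖x - z‖) →
      ((Fs + κ * (1 - γ * L) / (2 * (γ * κ + 1 - γ * L)) * ‖x - xbar‖ ^ 2 : ℝ) : EReal)
        ≤ Fγ x := by
  -- basic positivity facts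
  have hγ : 0 < γ := by
    by_contra h
    push_neg at h
    nlinarith
  have hβ : 0 < (1 - γ * L) / (2 * γ) := by
    apply div_pos <;> linarith
  -- F is lower semicontinuous
  have hFlsc : LowerSemicontinuous F := by
    have hFe : F = fun y => (f y : EReal) + ψ y := funext hF
    rw [hFe]
    apply LowerSemicontinuous.add'
    · exact (continuous_coe_real_ereal.comp hf.continuous).lowerSemicontinuous
    · exact hψclosed
    · intro z
      exact EReal.continuousAt_add (Or.inl (EReal.coe_ne_top _)) (Or.inl (EReal.coe_ne_bot _))
  -- Xs is closed
  have hXscl : IsClosed Xs := by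
    have hXe : Xs = F ⁻¹' Set.Iic (Fs : EReal) := by
      rw [hXs]
      ext y
      simp only [Set.mem_setOf_eq, Set.mem_preimage, Set.mem_Iic]
      exact ⟨fun h => h.le, fun h => le_antisymm h (hmin y)⟩
    rw [hXe]
    exact hFlsc.isClosed_preimage _
  -- existence of projections onto Xs
  have hproj_ex : ∀ u : EuclideanSpace ℝ (Fin n), ∃ ub ∈ Xs, ∀ z ∈ Xs, ‖u - ub‖ ≤ ‖u - z‖ := by
    intro u
    obtain ⟨ub, hub, hd⟩ := hXscl.exists_infDist_eq_dist hXsne u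
    refine ⟨ub, hub, fun z hz => ?_⟩
    rw [← dist_eq_norm, ← dist_eq_norm, ← hd]
    exact Metric.infDist_le_dist_of_mem hz
  intro x hx xbar hxbar hxproj
  -- Lemma A : the per-u lower bound from the descent lemma
  have lemA : ∀ u, F u + (((1 - γ * L) / (2 * γ) * ‖u - x‖ ^ 2 : ℝ) : EReal)
      ≤ ((f x + ⟪gradient f x, u - x⟫ + 1 / (2 * γ) * ‖u - x‖ ^ 2 : ℝ) : EReal) + ψ u := by
    intro u
    have hdes := descent_aux f L hL.le hf hlip x u
    have hr : f u + (1 - γ * L) / (2 * γ) * ‖u - x‖ ^ 2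
        ≤ f x + ⟪gradient f x, u - x⟫ + 1 / (2 * γ) * ‖u - x‖ ^ 2 := by
      have h1 : (1 - γ * L) / (2 * γ) = 1 / (2 * γ) - L / 2 := by
        field_simp
      rw [h1]
      linarith
    calc F u + (((1 - γ * L) / (2 * γ) * ‖u - x‖ ^ 2 : ℝ) : EReal)
        = ((f u + (1 - γ * L) / (2 * γ) * ‖u - x‖ ^ 2 : ℝ) : EReal) + ψ u := by
          rw [hF u, EReal.coe_add]
          abel
      _ ≤ _ := add_le_add_left (EReal.coe_le_coe_iff.2 hr) _
  -- Fs is a lower bound for every term in the infimum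
  have lemFs : ∀ u, (Fs : EReal)
      ≤ ((f x + ⟪gradient f x, u - x⟫ + 1 / (2 * γ) * ‖u - x‖ ^ 2 : ℝ) : EReal) + ψ u := by
    intro u
    refine le_trans ?_ (lemA u)
    calc (Fs : EReal) = (Fs : EReal) + 0 := (add_zero _).symm
      _ ≤ F u + (((1 - γ * L) / (2 * γ) * ‖u - x‖ ^ 2 : ℝ) : EReal) := by
          apply add_le_add (hmin u)
          exact_mod_cast mul_nonneg hβ.le (sq_nonneg _)
  have hFγxFs : (Fs : EReal) ≤ Fγ x := by
    rw [hFγ x]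
    exact le_iInf lemFs
  -- the term at u = y is F y
  have hexpr_self : ∀ y : EuclideanSpace ℝ (Fin n),
      ((f y + ⟪gradient f y, y - y⟫ + 1 / (2 * γ) * ‖y - y‖ ^ 2 : ℝ) : EReal) + ψ y = F y := by
    intro y
    rw [hF y]
    norm_num
  have hFγx₀ : Fγ x₀ ≤ F x₀ := by
    rw [hFγ x₀]
    exact iInf_le_of_le x₀ (le_of_eq (hexpr_self x₀))
  have hxF0 : Fγ x ≤ F x₀ := le_trans hx hFγx₀
  -- Lemma B : per-u bound when F u ≤ F x₀, via the growth condition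
  have lemB : ∀ u, F u ≤ F x₀ →
      ((Fs + κ * (1 - γ * L) / (2 * (γ * κ + 1 - γ * L)) * ‖x - xbar‖ ^ 2 : ℝ) : EReal)
        ≤ ((f x + ⟪gradient f x, u - x⟫ + 1 / (2 * γ) * ‖u - x‖ ^ 2 : ℝ) : EReal) + ψ u := by
    intro u hu
    obtain ⟨ub, hub, hubp⟩ := hproj_ex u
    have hgr := hgrowth u hu ub hub hubp
    have h1 : ‖x - xbar‖ ≤ ‖u - ub‖ + ‖u - x‖ := by
      calc ‖x - xbar‖ ≤ ‖x - ub‖ := hxproj ub hub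
        _ = ‖(x - u) + (u - ub)‖ := by rw [sub_add_sub_cancel]
        _ ≤ ‖x - u‖ + ‖u - ub‖ := norm_add_le _ _
        _ = ‖u - ub‖ + ‖u - x‖ := by rw [norm_sub_rev x u]; ring
    have hreal : Fs + κ * (1 - γ * L) / (2 * (γ * κ + 1 - γ * L)) * ‖x - xbar‖ ^ 2
        ≤ (Fs + κ / 2 * ‖u - ub‖ ^ 2) + (1 - γ * L) / (2 * γ) * ‖u - x‖ ^ 2 := by
      have hkey := split_quad (κ / 2) ((1 - γ * L) / (2 * γ))
        (κ * (1 - γ * L) / (2 * (γ * κ + 1 - γ * L))) ‖u - ub‖ ‖u - x‖ ‖x - xbar‖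
        (by linarith) hβ
        (by
          have hD : γ * κ + 1 - γ * L ≠ 0 := by nlinarith
          have hDp : 0 < γ * κ + 1 - γ * L := by nlinarith
          rw [div_add_div _ _ two_ne_zero (mul_ne_zero two_ne_zero hγ.ne'), div_mul_div_comm,
            div_mul_div_comm, div_eq_div_iff (by positivity) (by positivity)]
          ring)
        (norm_nonneg _) (norm_nonneg _) (norm_nonneg _) h1
      linarith
    calc ((Fs + κ * (1 - γ * L) / (2 * (γ * κ + 1 - γ * L)) * ‖x - xbar‖ ^ 2 : ℝ) : EReal)
        ≤ (((Fs + κ / 2 * ‖u - ub‖ ^ 2) + (1 - γ * L) / (2 * γ) * ‖u - x‖ ^ 2 : ℝ) : EReal) :=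
          EReal.coe_le_coe_iff.2 hreal
      _ = ((Fs + κ / 2 * ‖u - ub‖ ^ 2 : ℝ) : EReal)
          + (((1 - γ * L) / (2 * γ) * ‖u - x‖ ^ 2 : ℝ) : EReal) := EReal.coe_add _ _
      _ ≤ F u + (((1 - γ * L) / (2 * γ) * ‖u - x‖ ^ 2 : ℝ) : EReal) := add_le_add_left hgr _
      _ ≤ _ := lemA u
  -- main case analysis
  by_cases hFx : F x ≤ Fγ x
  · have h := lemB x (hFx.trans hxF0)
    rw [hexpr_self x] at h
    exact h.trans hFx
  · by_contra hcon
    push_neg at hcon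
    have hrlt : Fγ x < F x := not_le.1 hFx
    have hne_top : Fγ x ≠ ⊤ := (lt_of_lt_of_le hcon le_top).ne
    have hne_bot : Fγ x ≠ ⊥ := (lt_of_lt_of_le (EReal.bot_lt_coe Fs) hFγxFs).ne'
    set r₀ := (Fγ x).toReal with hr₀def
    have hr₀ : Fγ x = (r₀ : EReal) := (EReal.coe_toReal hne_top hne_bot).symm
    rw [hr₀] at hrlt hcon
    obtain ⟨r, hr1, hr2⟩ := EReal.exists_between_coe_real hrlt
    obtain ⟨δ, hδ0, hδ⟩ := Metric.eventually_nhds_iff.1 (hFlsc x (r : EReal) hr2)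
    set M : EReal := min (min ((r : EReal))
        ((Fs + κ * (1 - γ * L) / (2 * (γ * κ + 1 - γ * L)) * ‖x - xbar‖ ^ 2 : ℝ) : EReal))
        ((r₀ + (1 - γ * L) / (2 * γ) * δ ^ 2 : ℝ) : EReal) with hMdef
    have hM : M ≤ Fγ x := by
      rw [hFγ x]
      apply le_iInf
      intro u
      by_cases hdu : dist u x < δ
      · calc M ≤ (r : EReal) := (min_le_left _ _).trans (min_le_left _ _)
          _ ≤ F u := (hδ hdu).le
          _ = F u + 0 := (add_zero _).symm
          _ ≤ F u + (((1 - γ * L) / (2 * γ) * ‖u - x‖ ^ 2 : ℝ) : EReal) := by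
              apply add_le_add_right
              exact_mod_cast mul_nonneg hβ.le (sq_nonneg _)
          _ ≤ _ := lemA u
      · by_cases hu : F u ≤ F x₀
        · exact le_trans ((min_le_left _ _).trans (min_le_right _ _)) (lemB u hu)
        · have hu' : F x₀ ≤ F u := (not_le.1 hu).le
          have hδb : δ ≤ ‖u - x‖ := by
            rw [← dist_eq_norm]
            exact not_lt.1 hdu
          calc M ≤ ((r₀ + (1 - γ * L) / (2 * γ) * δ ^ 2 : ℝ) : EReal) := min_le_right _ _
            _ = (r₀ : EReal) + (((1 - γ * L) / (2 * γ) * δ ^ 2 : ℝ) : EReal) := EReal.coe_add _ _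
            _ ≤ F u + (((1 - γ * L) / (2 * γ) * ‖u - x‖ ^ 2 : ℝ) : EReal) := by
                apply add_le_add ((hr₀ ▸ hxF0).trans hu')
                apply EReal.coe_le_coe_iff.2
                have hsq : δ ^ 2 ≤ ‖u - x‖ ^ 2 := by nlinarith
                exact mul_le_mul_of_nonneg_left hsq hβ.le
            _ ≤ _ := lemA u
    have hMr : (r₀ : EReal) < M := by
      apply lt_min (lt_min hr1 hcon)
      apply EReal.coe_lt_coe_iff.2
      nlinarith [mul_pos hβ (pow_pos hδ0 2)]
    rw [hr₀] at hM
    exact absurd (hMr.trans_le hM) (lt_irrefl _)
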